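/- Let Ω be a topological space, g : Ω × Ω → ℝ a continuous function satisfying (g1) g(r,u) = 0 implies r = u, (g2) |g(r,u)| = |g(u,r)|, and (g3) |g(r,u)| ≤ |g(r,t)| + |g(t,u)| for all r, u, t ∈ Ω, R a binary relation on Ω, and S : Ω → Ω a map such that: (i) Ω is g-R-complete; (ii) R is S-closed; (iii) there exists r₀ ∈ Ω with (r₀, S r₀) ∈ R; (iv) S is g-R-continuous or R is g-self-closed; (v) there exists α ∈ (0,1) with |g(Sx, Sy)| ≤ α |g(x,y)| for all (x,y) ∈ R. If, in addition, the image S(Ω) is Rˢ-connected (for every u, v ∈ S(Ω) there exists a finite sequence p₀ = u, p₁, …, p_t = v with [pᵢ, pᵢ₊₁] ∈ R for each i, i.e., (pᵢ, pᵢ₊₁) ∈ R or (pᵢ₊₁, pᵢ) ∈ R), then S has exactly one fixed point. -/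

import Mathlib

open Filter

set_option maxHeartbeats 1000000

/-- Uniqueness of the fixed point under `Rˢ`-connectedness of `S(Ω)`:
under the assumptions of the relation-theoretic Banach contraction principle
together with the path-connectedness of the image of `S` under the symmetric
closure of `R`, the mapping `S` has exactly one fixed point. -/
theorem relational_BCP_unique {Ω : Type*} [TopologicalSpace Ω]
    (g : Ω × Ω → ℝ) (hg_cont : Continuous g)
    (hg1 : ∀ r u : Ω, g (r, u) = 0 → r = u)
    (hg2 : ∀ r u : Ω, |g (r, u)| = |g (u, r)|)
    (hg3 : ∀ r u t : Ω, |g (r, u)| ≤ |g (r, t)| + |g (t, u)|)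
    (R : Ω → Ω → Prop) (S : Ω → Ω)
    -- (i) Ω is g-R-complete
    (hcomplete : ∀ r : ℕ → Ω, (∀ n, R (r n) (r (n + 1))) →
      Tendsto (fun p : ℕ × ℕ => |g (r p.1, r p.2)|) atTop (nhds 0) →
      ∃ x : Ω, Tendsto (fun n => |g (r n, x)|) atTop (nhds 0))
    -- (ii) R is S-closed
    (hSclosed : ∀ x y : Ω, R x y → R (S x) (S y))
    -- (iii) Ω(S; R) is nonempty
    (hnonempty : ∃ r₀ : Ω, R r₀ (S r₀))
    -- (iv) S is g-R-continuous or R is g-self-closed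
    (hiv : (∀ (r : ℕ → Ω) (x : Ω), (∀ n, R (r n) (r (n + 1))) →
        Tendsto (fun n => |g (r n, x)|) atTop (nhds 0) →
        Tendsto (fun n => |g (S (r n), S x)|) atTop (nhds 0)) ∨
      (∀ (r : ℕ → Ω) (x : Ω), (∀ n, R (r n) (r (n + 1))) →
        Tendsto (fun n => |g (r n, x)|) atTop (nhds 0) →
        ∃ φ : ℕ → ℕ, StrictMono φ ∧ ∀ l : ℕ, R (r (φ l)) x))
    -- (v) S is a topologically R-preserving contraction w.r.t. g
    (α : ℝ) (hα : α ∈ Set.Ioo (0 : ℝ) 1)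
    (hcontr : ∀ x y : Ω, R x y → |g (S x, S y)| ≤ α * |g (x, y)|)
    -- S(Ω) is Rˢ-connected
    (hconn : ∀ u v : Ω, u ∈ Set.range S → v ∈ Set.range S →
      ∃ (t : ℕ) (p : ℕ → Ω), p 0 = u ∧ p t = v ∧
        ∀ i < t, R (p i) (p (i + 1)) ∨ R (p (i + 1)) (p i)) :
    ∃! x : Ω, S x = x := by
  obtain ⟨hα0, hα1⟩ := hα
  obtain ⟨r₀, hr₀⟩ := hnonempty
  have h1α : (0:ℝ) < 1 - α := by linarith
  have hαn : ∀ n : ℕ, (0:ℝ) ≤ α ^ n := fun n => by positivity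
  have hpow : Tendsto (fun n : ℕ => α ^ n) atTop (nhds 0) :=
    tendsto_pow_atTop_nhds_zero_of_lt_one hα0.le hα1
  -- chain triangle inequality
  have hchain : ∀ (q : ℕ → Ω) (t : ℕ),
      |g (q 0, q (t+1))| ≤ ∑ i ∈ Finset.range (t+1), |g (q i, q (i+1))| := by
    intro q t
    induction t with
    | zero => simp
    | succ t ih =>
        calc |g (q 0, q (t+2))| ≤ |g (q 0, q (t+1))| + |g (q (t+1), q (t+2))| :=
              hg3 _ _ _
        _ ≤ (∑ i ∈ Finset.range (t+1), |g (q i, q (i+1))|) + |g (q (t+1), q (t+2))| := by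
              linarith
        _ = ∑ i ∈ Finset.range (t+2), |g (q i, q (i+1))| := (Finset.sum_range_succ _ _).symm
  -- geometric sum bound
  have hgsum : ∀ k : ℕ, ∑ i ∈ Finset.range k, α^i ≤ (1-α)⁻¹ := by
    intro k
    have hm := geom_sum_mul α k
    have hk : (0:ℝ) ≤ α ^ k := hαn k
    rw [inv_eq_one_div, le_div_iff₀ h1α]
    nlinarith [hm]
  -- symmetric contraction
  have hcontr' : ∀ x y : Ω, (R x y ∨ R y x) → |g (S x, S y)| ≤ α * |g (x, y)| := by
    rintro x y (h | h)
    · exact hcontr x y h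
    · rw [hg2, hg2 x y]; exact hcontr y x h
  -- iterate contraction along the symmetric closure
  have hiter : ∀ (x y : Ω), (R x y ∨ R y x) → ∀ n : ℕ,
      (R (S^[n] x) (S^[n] y) ∨ R (S^[n] y) (S^[n] x)) ∧
      |g (S^[n] x, S^[n] y)| ≤ α ^ n * |g (x, y)| := by
    intro x y h n
    induction n with
    | zero => simpa using h
    | succ n ih =>
        obtain ⟨ihR, ihb⟩ := ih
        constructor
        · rw [Function.iterate_succ_apply' S n x, Function.iterate_succ_apply' S n y]
          rcases ihR with h' | h'
          · exact Or.inl (hSclosed _ _ h')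
          · exact Or.inr (hSclosed _ _ h')
        · rw [Function.iterate_succ_apply' S n x, Function.iterate_succ_apply' S n y]
          calc |g (S (S^[n] x), S (S^[n] y))| ≤ α * |g (S^[n] x, S^[n] y)| :=
                hcontr' _ _ ihR
          _ ≤ α * (α ^ n * |g (x, y)|) := by
                exact mul_le_mul_of_nonneg_left ihb hα0.le
          _ = α ^ (n+1) * |g (x, y)| := by ring
  -- the Picard sequence
  set r : ℕ → Ω := fun n => S^[n] r₀ with hrdef
  have hrsucc : ∀ n, r (n+1) = S (r n) := fun n => Function.iterate_succ_apply' S n r₀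
  have hR : ∀ n, R (r n) (r (n+1)) := by
    intro n
    induction n with
    | zero => simpa [hrdef, hrsucc 0] using hr₀
    | succ n ih =>
        rw [hrsucc n] at ih
        rw [hrsucc (n+1), hrsucc n]
        exact hSclosed _ _ ih
  set C : ℝ := |g (r 0, r 1)| with hCdef
  have hC0 : 0 ≤ C := abs_nonneg _
  have hgeo : ∀ n, |g (r n, r (n+1))| ≤ α ^ n * C := by
    intro n
    induction n with
    | zero => simp [hCdef]
    | succ n ih =>
        have h := hcontr _ _ (hR n)
        rw [← hrsucc (n+1), ← hrsucc n] at h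
        have h2 : α * |g (r n, r (n+1))| ≤ α * (α ^ n * C) :=
          mul_le_mul_of_nonneg_left ih hα0.le
        calc |g (r (n+1), r (n+1+1))| ≤ α * (α ^ n * C) := le_trans h h2
        _ = α ^ (n+1) * C := by ring
  set K : ℝ := 2 * C * (1-α)⁻¹ with hKdef
  have hK0 : 0 ≤ K := by positivity
  -- Cauchy estimate
  have hcauchy : ∀ m n : ℕ, m ≤ n → |g (r m, r n)| ≤ α ^ m * K := by
    intro m n hmn
    rcases Nat.eq_or_lt_of_le hmn with rfl | hlt
    · calc |g (r m, r m)| ≤ |g (r m, r (m+1))| + |g (r (m+1), r m)| := hg3 _ _ _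
      _ = |g (r m, r (m+1))| + |g (r m, r (m+1))| := by rw [hg2 (r (m+1)) (r m)]
      _ ≤ α ^ m * C + α ^ m * C := by linarith [hgeo m]
      _ ≤ α ^ m * K := by
          rw [hKdef]
          have h1 : (1:ℝ) ≤ (1-α)⁻¹ := by
            rw [inv_eq_one_div, le_div_iff₀ h1α]; linarith
          nlinarith [mul_nonneg (mul_nonneg (hαn m) hC0) (sub_nonneg.mpr h1)]
    · obtain ⟨k, rfl⟩ : ∃ k, n = m + (k + 1) := ⟨n - m - 1, by omega⟩
      calc |g (r m, r (m + (k+1)))|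
          ≤ ∑ i ∈ Finset.range (k+1), |g (r (m+i), r (m+i+1))| := by
            have := hchain (fun i => r (m+i)) k
            simpa [Nat.add_assoc] using this
        _ ≤ ∑ i ∈ Finset.range (k+1), α ^ (m+i) * C := by
            apply Finset.sum_le_sum
            intro i _
            simpa [Nat.add_assoc] using hgeo (m+i)
        _ = α ^ m * C * ∑ i ∈ Finset.range (k+1), α ^ i := by
            rw [Finset.mul_sum]
            apply Finset.sum_congr rfl
            intro i _
            rw [pow_add]; ring
        _ ≤ α ^ m * C * (1-α)⁻¹ := by
            apply mul_le_mul_of_nonneg_left (hgsum (k+1)) (by positivity)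
        _ ≤ α ^ m * K := by
            rw [hKdef]
            have : (0:ℝ) ≤ α ^ m * C * (1-α)⁻¹ := by positivity
            nlinarith [this]
  -- the sequence is g-Cauchy
  have hmin : Tendsto (fun p : ℕ × ℕ => min p.1 p.2) atTop atTop := by
    refine tendsto_atTop.mpr fun b => ?_
    filter_upwards [eventually_ge_atTop (b, b)] with p hp
    exact le_min hp.1 hp.2
  have hcau2 : Tendsto (fun p : ℕ × ℕ => |g (r p.1, r p.2)|) atTop (nhds 0) := by
    apply squeeze_zero (fun p => abs_nonneg _)
      (g := fun p : ℕ × ℕ => α ^ (min p.1 p.2) * K)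
    · rintro ⟨m, n⟩
      rcases le_total m n with h | h
      · simpa [min_eq_left h] using hcauchy m n h
      · rw [hg2]
        simpa [min_eq_right h] using hcauchy n m h
    · have := (hpow.comp hmin).mul_const K
      simpa using this
  obtain ⟨x, hx⟩ := hcomplete r hR hcau2
  -- x is a fixed point
  have hfix : S x = x := by
    have hkey : Tendsto (fun _ : ℕ => |g (x, S x)|) atTop (nhds 0) → S x = x := by
      intro h
      have h0 : |g (x, S x)| = 0 := tendsto_nhds_unique tendsto_const_nhds h
      exact (hg1 x (S x) (abs_eq_zero.mp h0)).symm
    rcases hiv with hcontS | hself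
    · -- continuity case
      have h1 : Tendsto (fun n => |g (r (n+1), S x)|) atTop (nhds 0) := by
        have := hcontS r x hR hx
        simpa [hrsucc] using this
      have h2 : Tendsto (fun n => |g (x, r (n+1))|) atTop (nhds 0) := by
        have := hx.comp (tendsto_add_atTop_nat 1)
        simp only [Function.comp_def] at this
        simpa [hg2 x] using this
      apply hkey
      apply squeeze_zero (fun n => abs_nonneg _)
        (g := fun n => |g (x, r (n+1))| + |g (r (n+1), S x)|)
      · intro n; exact hg3 _ _ _
      · simpa using h2.add h1
    · -- self-closed case
      obtain ⟨φ, hφ, hφR⟩ := hself r x hR hx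
      have hφtop : Tendsto φ atTop atTop := hφ.tendsto_atTop
      have h1 : Tendsto (fun l => |g (r (φ l + 1), S x)|) atTop (nhds 0) := by
        apply squeeze_zero (fun l => abs_nonneg _)
          (g := fun l => α * |g (r (φ l), x)|)
        · intro l
          rw [hrsucc]
          exact hcontr _ _ (hφR l)
        · have := (hx.comp hφtop).const_mul α
          simpa using this
      have h2 : Tendsto (fun l => |g (x, r (φ l + 1))|) atTop (nhds 0) := by
        have : Tendsto (fun l => φ l + 1) atTop atTop :=
          tendsto_atTop_mono (fun l => Nat.le_succ (φ l)) hφtop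
        have := hx.comp this
        simp only [Function.comp_def] at this
        simpa [hg2 x] using this
      apply hkey
      apply squeeze_zero (fun l => abs_nonneg _)
        (g := fun l => |g (x, r (φ l + 1))| + |g (r (φ l + 1), S x)|)
      · intro l; exact hg3 _ _ _
      · simpa using h2.add h1
  refine ⟨x, hfix, ?_⟩
  -- uniqueness
  intro y hy
  obtain ⟨t, p, hp0, hpt, hpR⟩ := hconn y x ⟨y, hy⟩ ⟨x, hfix⟩
  rcases Nat.eq_zero_or_pos t with rfl | ht
  · rw [← hp0, hpt]
  obtain ⟨k, rfl⟩ : ∃ k, t = k + 1 := ⟨t - 1, by omega⟩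
  have hfixiter : ∀ n : ℕ, S^[n] y = y := fun n => Function.iterate_fixed hy n
  have hfixiterx : ∀ n : ℕ, S^[n] x = x := fun n => Function.iterate_fixed hfix n
  set D : ℝ := ∑ i ∈ Finset.range (k+1), |g (p i, p (i+1))| with hDdef
  have hbound : ∀ n : ℕ, |g (y, x)| ≤ α ^ n * D := by
    intro n
    calc |g (y, x)| = |g (S^[n] (p 0), S^[n] (p (k+1)))| := by
          rw [hp0, hpt, hfixiter, hfixiterx]
    _ ≤ ∑ i ∈ Finset.range (k+1), |g (S^[n] (p i), S^[n] (p (i+1)))| :=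
        hchain (fun i => S^[n] (p i)) k
    _ ≤ ∑ i ∈ Finset.range (k+1), α ^ n * |g (p i, p (i+1))| := by
        apply Finset.sum_le_sum
        intro i hi
        exact (hiter (p i) (p (i+1)) (hpR i (Finset.mem_range.mp hi)) n).2
    _ = α ^ n * D := (Finset.mul_sum _ _ _).symm
  have hlim : Tendsto (fun n : ℕ => α ^ n * D) atTop (nhds 0) := by
    simpa using hpow.mul_const D
  have h0 : |g (y, x)| ≤ 0 := ge_of_tendsto' hlim hbound
  have : |g (y, x)| = 0 := le_antisymm h0 (abs_nonneg _)
  exact hg1 y x (abs_eq_zero.mp this)
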